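/- arXiv:2110.12928 — 2 statements merged into one kernel-verified Lean document; each statement's English description precedes it below -/
import Mathlib

section
/- Let G be a connected graph, let T be a search tree on G, and let (p,c) be an edge of T with p the parent of c. Then the rooted tree obtained by rotating the edge (p,c) in T is again a search tree on G. -/
/-- A rooted tree (or the empty tree) on a subset `supp` of the vertex type `V`,
represented by parent pointers. -/
structure RTree (V : Type) where
  supp : Finset V
  parent : V → Option V
  parent_eq_none : ∀ v ∉ supp, parent v = none
  mem_of_parent : ∀ {v w : V}, parent v = some w → v ∈ supp ∧ w ∈ supp
  root_unique : ∀ v ∈ supp, ∀ w ∈ supp, parent v = none → parent w = none → v = w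
  reaches_root : ∀ v ∈ supp, ∃ r ∈ supp, parent r = none ∧
    Relation.ReflTransGen (fun a b => parent a = some b) v r

namespace RTree

variable {V : Type}

/-- `T.Anc a v` : `a` is an ancestor of `v` in `T` (possibly `a = v`). -/
def Anc (T : RTree V) (a v : V) : Prop :=
  Relation.ReflTransGen (fun x y => T.parent x = some y) v a

/-- `a` is a strict ancestor of `v`. -/
def StrictAnc (T : RTree V) (a v : V) : Prop := a ≠ v ∧ T.Anc a v

/-- The set of vertices of the subtree rooted at `a` (the descendants of `a`). -/
def descSet (T : RTree V) (a : V) : Set V := {v | T.Anc a v}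

/-- The depth of a node: the number of nodes on the path from the root to it
(the root has depth 1). -/
noncomputable def depth (T : RTree V) (v : V) : ℕ := Set.ncard {a | T.Anc a v}

def IsRoot (T : RTree V) (r : V) : Prop := r ∈ T.supp ∧ T.parent r = none

end RTree

/-- The restriction of a graph to a set of vertices (keeping the ambient vertex type). -/
def restrictG {V : Type} (G : SimpleGraph V) (U : Set V) : SimpleGraph V where
  Adj a b := G.Adj a b ∧ a ∈ U ∧ b ∈ U
  symm := ⟨fun a b ⟨h, ha, hb⟩ => ⟨h.symm, hb, ha⟩⟩
  loopless := ⟨fun a ⟨h, _, _⟩ => G.irrefl h⟩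

/-- `T` is a search tree on the induced subgraph `G[U]`: its nodes are the vertices of `U`,
the subtree of every node induces a connected subgraph, and every edge of `G[U]` joins
two comparable nodes of `T`. -/
def IsSTGOn {V : Type} (G : SimpleGraph V) (U : Finset V) (T : RTree V) : Prop :=
  T.supp = U ∧
  (∀ v ∈ U, ((restrictG G ↑U).induce (T.descSet v)).Connected) ∧
  (∀ u v : V, u ∈ U → v ∈ U → G.Adj u v → T.Anc u v ∨ T.Anc v u)

/-- `T` is a search tree on the graph `G`. -/
def IsSTG {V : Type} [Fintype V] (G : SimpleGraph V) (T : RTree V) : Prop :=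
  IsSTGOn G Finset.univ T

/-- `T'` is obtained from `T` by rotating the edge `(p, c)` of `T`, where `p` is
the parent of `c`: `c` replaces `p` (becoming a child of `p`'s former parent, or the
root if `p` was the root), `p` becomes a child of `c`, `p` keeps its other children,
and each child `x` of `c` whose subtree contains a vertex of `G` adjacent to `p`
becomes a child of `p` (the other children of `c` stay children of `c`). -/
def IsRotationAt {V : Type} (G : SimpleGraph V) (T T' : RTree V) (p c : V) : Prop :=
  T.parent c = some p ∧
  T'.supp = T.supp ∧
  T'.parent c = T.parent p ∧
  T'.parent p = some c ∧
  (∀ x : V, x ≠ p → T.parent x = some c →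
    ((∃ u ∈ T.descSet x, G.Adj u p) → T'.parent x = some p) ∧
    (¬(∃ u ∈ T.descSet x, G.Adj u p) → T'.parent x = some c)) ∧
  (∀ x : V, x ≠ c → x ≠ p → T.parent x ≠ some c → T'.parent x = T.parent x)

/-- `T'` is obtained from `T` by a single rotation. -/
def IsRotation {V : Type} (G : SimpleGraph V) (T T' : RTree V) : Prop :=
  ∃ p c, IsRotationAt G T T' p c

/-- `T2` can be obtained from `T1` by exactly `k` rotations. -/
def ReachesIn {V : Type} (G : SimpleGraph V) : ℕ → RTree V → RTree V → Prop
  | 0, T1, T2 => T1 = T2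
  | k+1, T1, T2 => ∃ T', IsRotation G T1 T' ∧ ReachesIn G k T' T2

/-- Vertex type of the caterpillar `C(m_1, …, m_n)`: spine vertices `inl i` and
leg vertices `inr ⟨i, j⟩`. -/
abbrev CatV (n : ℕ) (m : Fin n → ℕ) : Type := Fin n ⊕ (Σ i : Fin n, Fin (m i))

/-- The caterpillar tree `C(m_1, …, m_n)`: the spine `s_1 - s_2 - ⋯ - s_n` is a path,
and leg `ℓ_{i,j}` is adjacent to `s_i`. -/
def caterpillar (n : ℕ) (m : Fin n → ℕ) : SimpleGraph (CatV n m) where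
  Adj x y :=
    match x, y with
    | Sum.inl i, Sum.inl j => i.val + 1 = j.val ∨ j.val + 1 = i.val
    | Sum.inl i, Sum.inr l => l.1 = i
    | Sum.inr l, Sum.inl i => l.1 = i
    | Sum.inr _, Sum.inr _ => False
  symm := ⟨by rintro (i | l) (j | l') h <;> simp_all <;> tauto⟩
  loopless := ⟨by rintro (i | l) h <;> simp_all⟩

/-- The (base 2) Shannon entropy `H(m_1, …, m_n) = ∑_{i : m_i > 0} (m_i/m) log (m/m_i)`. -/
noncomputable def shannonH {n : ℕ} (m : Fin n → ℕ) : ℝ :=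
  ∑ i, if 0 < m i then
    ((m i : ℝ) / (∑ j, (m j : ℝ))) * Real.logb 2 ((∑ j, (m j : ℝ)) / (m i : ℝ))
  else 0

/-- The parent function of the search tree `A(S, π)` on the caterpillar: the legs form a
path at the top of the tree, ordered bottom-to-top according to `π`, and the spine nodes
hang below, arranged according to the BST `S`. -/
def AParent {n : ℕ} {m : Fin n → ℕ} (S : RTree (Fin n))
    (π : Fin (∑ i, m i) ≃ (Σ i : Fin n, Fin (m i))) :
    CatV n m → Option (CatV n m) :=
  fun x => match x with
  | Sum.inl i =>
      match S.parent i with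
      | some j => some (Sum.inl j)
      | none => if h : 0 < ∑ i, m i then some (Sum.inr (π ⟨0, h⟩)) else none
  | Sum.inr l =>
      if h : (π.symm l).val + 1 < ∑ i, m i then
        some (Sum.inr (π ⟨(π.symm l).val + 1, h⟩))
      else none

/-- `T = A(S, π)`. -/
def IsA {n : ℕ} {m : Fin n → ℕ} (S : RTree (Fin n))
    (π : Fin (∑ i, m i) ≃ (Σ i : Fin n, Fin (m i))) (T : RTree (CatV n m)) : Prop :=
  T.supp = Finset.univ ∧ T.parent = AParent S π

/-- The parent function of the search tree `B(S)` on the caterpillar: every leg `ℓ_{i,j}`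
is a (childless) child of `s_i`, and the spine nodes are arranged according to `S`. -/
def BParent {n : ℕ} {m : Fin n → ℕ} (S : RTree (Fin n)) :
    CatV n m → Option (CatV n m) :=
  fun x => match x with
  | Sum.inl i => (S.parent i).map Sum.inl
  | Sum.inr l => some (Sum.inl l.1)

/-- `T = B(S)`. -/
def IsB {n : ℕ} {m : Fin n → ℕ} (S : RTree (Fin n)) (T : RTree (CatV n m)) : Prop :=
  T.supp = Finset.univ ∧ T.parent = BParent S

/-- `σ(π)`: the sequence of spine indices obtained from the leg ordering `π` by replacing
each leg `ℓ_{i,j}` with `i`. -/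
def sigmaOf {n : ℕ} {m : Fin n → ℕ}
    (π : Fin (∑ i, m i) ≃ (Σ i : Fin n, Fin (m i))) : List (Fin n) :=
  List.ofFn (fun j => (π j).1)

/-- Every leg node of `T` is bound, i.e. no leg node has a child. -/
def noFreeLegs {n : ℕ} {m : Fin n → ℕ} (T : RTree (CatV n m)) : Prop :=
  ∀ (x : CatV n m) (l : Σ i : Fin n, Fin (m i)), T.parent x ≠ some (Sum.inr l)

open Classical in
/-- The number of adjacent pairs in a list satisfying `P`. -/
noncomputable def pairAlt {α : Type} (P : α → α → Prop) : List α → ℕ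
  | [] => 0
  | [_] => 0
  | a :: b :: t => (if P a b then 1 else 0) + pairAlt P (b :: t)

open Classical in
/-- Wilber's quantity `λ(S, u, σ)`: 0 if `u` has at most one child; otherwise the number
of adjacent pairs in the restriction of `σ` to the subtree of `u` that do not both lie in
the subtree of one child of `u` and are not both equal to `u`. -/
noncomputable def wilberLam {n : ℕ} (S : RTree (Fin n)) (u : Fin n) (σ : List (Fin n)) : ℕ :=
  if (∃ v w : Fin n, v ≠ w ∧ S.parent v = some u ∧ S.parent w = some u) then
    pairAlt (fun x y =>
      ¬((x = u ∧ y = u) ∨ ∃ ch, S.parent ch = some u ∧ S.Anc ch x ∧ S.Anc ch y))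
      (σ.filter (fun x => decide (S.Anc u x)))
  else 0

/-- `λ'(S, u, σ) = λ(S, u, σ)` plus the number of occurrences of `u` in `σ`. -/
noncomputable def wilberLam' {n : ℕ} (S : RTree (Fin n)) (u : Fin n)
    (σ : List (Fin n)) : ℕ :=
  wilberLam S u σ + σ.count u

/-- Wilber's first lower bound `Λ'(S, σ) = ∑_u λ'(S, u, σ)`. -/
noncomputable def wilberL' {n : ℕ} (S : RTree (Fin n)) (σ : List (Fin n)) : ℕ :=
  ∑ u : Fin n, wilberLam' S u σ

/-- `P` is the projection `T[U]` of `T` onto `U`: its nodes are the nodes of `T` in `U`,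
and the parent of `u` in `P` is the nearest strict ancestor of `u` in `T` that lies
in `U` (which is exactly the result of pruning the vertices outside `U` one by one). -/
def IsProjOn {V : Type} [DecidableEq V] (T : RTree V) (U : Finset V) (P : RTree V) : Prop :=
  P.supp = T.supp ∩ U ∧
  ∀ u w : V, P.parent u = some w ↔
    (u ∈ U ∧ w ∈ U ∧ T.StrictAnc w u ∧ ∀ z ∈ U, T.StrictAnc z u → T.Anc z w)

/-- `P` is obtained from `T` by pruning the vertex `v`. -/
def IsPruneOf {V : Type} [DecidableEq V] (T : RTree V) (v : V) (P : RTree V) : Prop :=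
  IsProjOn T (T.supp.erase v) P

/-- `PruneSeq T l P`: `P` is obtained from `T` by successively pruning the
vertices in the list `l`, in order. -/
def PruneSeq {V : Type} [DecidableEq V] : RTree V → List V → RTree V → Prop
  | T, [], P => P = T
  | T, v :: rest, P => ∃ P', IsPruneOf T v P' ∧ PruneSeq P' rest P

/-- The number of alternations (edges whose endpoints get different colors under `f`)
on the path from the root to `z`. -/
noncomputable def altAt {V K : Type} (f : V → K) (T : RTree V) (z : V) : ℕ :=
  Set.ncard {x | T.Anc x z ∧ ∃ y, T.parent x = some y ∧ f x ≠ f y}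

/-- The alternation number of `T` w.r.t. the coloring `f`: the maximum number of
alternations on a root-to-node path. -/
noncomputable def altNum {V K : Type} (f : V → K) (T : RTree V) : ℕ :=
  T.supp.sup (fun z => altAt f T z)

namespace RotAux

open Relation

variable {V : Type}

/-- parent-step relation -/
def pst (T : RTree V) : V → V → Prop := fun a b => T.parent a = some b

theorem det_total {T : RTree V} {x y z : V}
    (hxy : ReflTransGen (pst T) x y) (hxz : ReflTransGen (pst T) x z) :
    ReflTransGen (pst T) y z ∨ ReflTransGen (pst T) z y := by
  induction hxy using Relation.ReflTransGen.head_induction_on generalizing z with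
  | refl => exact .inl hxz
  | head hab h ih =>
    rcases hxz.cases_head with rfl | ⟨w, hw, hwz⟩
    · exact .inr (ReflTransGen.head hab h)
    · have : w = _ := Option.some.inj (hw.symm.trans hab)
      subst this
      exact ih hwz

theorem chain_antisymm {T : RTree V} (hU : ∀ v, v ∈ T.supp) :
    ∀ {a b : V}, ReflTransGen (pst T) a b → ReflTransGen (pst T) b a → a = b := by
  intro a b hab hba
  obtain ⟨r, -, hrnone, hchain⟩ := T.reaches_root a (hU a)
  induction hchain using Relation.ReflTransGen.head_induction_on generalizing b with
  | refl =>
    rcases hab.cases_head with rfl | ⟨w, hw, -⟩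
    · rfl
    · exact absurd hw (by simp [pst, hrnone])
  | head hstep htail ih =>
    rename_i a x'
    rcases hab.cases_head with rfl | ⟨w, hw, hwb⟩
    · rfl
    · have hwx : w = x' := Option.some.inj (hw.symm.trans hstep)
      rw [hwx] at hwb
      have h1 : x' = b := ih hwb (hba.tail hstep)
      subst h1
      exact (ih hba (ReflTransGen.single hstep)).symm

theorem no_self_loop {T : RTree V} (hU : ∀ v, v ∈ T.supp) (x : V) :
    T.parent x ≠ some x := by
  intro h
  obtain ⟨r, -, hrnone, hchain⟩ := T.reaches_root x (hU x)
  have key : ∀ y, ReflTransGen (pst T) x y → y = x := by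
    intro y hy
    induction hy with
    | refl => rfl
    | tail h1 h2 ih =>
      subst ih
      exact Option.some.inj (h2.symm.trans h)
  have := key r hchain
  subst this
  simp [h] at hrnone

end RotAux

namespace RotAux

open Relation

variable {V : Type}

open Classical in
/-- the rotated parent function -/
noncomputable def rotParent (G : SimpleGraph V) (T : RTree V) (p c : V) : V → Option V :=
  fun x =>
    if x = c then T.parent p
    else if x = p then some c
    else if T.parent x = some c then
      (if ∃ u, ReflTransGen (pst T) u x ∧ G.Adj u p then some p else some c)
    else T.parent x

/-- step relation of the rotated tree -/
def rst (G : SimpleGraph V) (T : RTree V) (p c : V) : V → V → Prop :=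
  fun a b => rotParent G T p c a = some b

section Facts

variable {G : SimpleGraph V} {T : RTree V} {p c : V}
variable (hU : ∀ v, v ∈ T.supp) (hpc : T.parent c = some p)

include hU hpc

theorem c_ne_p : c ≠ p := by
  rintro rfl; exact no_self_loop hU c hpc

theorem fp_ne_c : T.parent p ≠ some c := by
  intro h
  exact c_ne_p hU hpc (chain_antisymm hU (ReflTransGen.single hpc) (ReflTransGen.single h))

omit hU hpc in
theorem rot_c : rotParent G T p c c = T.parent p := by simp [rotParent]

theorem rot_p : rotParent G T p c p = some c := by
  simp [rotParent, (c_ne_p hU hpc).symm]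

omit hU hpc in
theorem rot_child_pos {x : V} (h1 : x ≠ c) (h2 : x ≠ p) (h3 : T.parent x = some c)
    (hm : ∃ u, ReflTransGen (pst T) u x ∧ G.Adj u p) :
    rotParent G T p c x = some p := by
  simp [rotParent, h1, h2, h3, hm]

omit hU hpc in
theorem rot_child_neg {x : V} (h1 : x ≠ c) (h2 : x ≠ p) (h3 : T.parent x = some c)
    (hm : ¬ ∃ u, ReflTransGen (pst T) u x ∧ G.Adj u p) :
    rotParent G T p c x = some c := by
  simp [rotParent, h1, h2, h3, hm]

omit hU hpc in
theorem rot_other {x : V} (h1 : x ≠ c) (h2 : x ≠ p) (h3 : T.parent x ≠ some c) :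
    rotParent G T p c x = T.parent x := by
  simp [rotParent, h1, h2, h3]

/-- forward simulation: main joint lemma -/
theorem fwd12 : ∀ {v a : V}, ReflTransGen (pst T) v a →
    (a = p → ReflTransGen (rst G T p c) v c) ∧
    (a ≠ p → ReflTransGen (rst G T p c) v a) := by
  intro v a h
  induction h with
  | refl =>
    refine ⟨?_, fun _ => .refl⟩
    intro h
    rw [h]
    exact ReflTransGen.single (rot_p hU hpc)
  | @tail b a hvb hba ih =>
    constructor
    · intro hap
      rw [hap] at hba
      by_cases hbc : b = c
      · have hbp : b ≠ p := by rw [hbc]; exact c_ne_p hU hpc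
        have h2 := ih.2 hbp
        rwa [hbc] at h2
      · have hbp : b ≠ p := fun h => no_self_loop hU p (h ▸ hba)
        have hb' : rst G T p c b p := by
          show rotParent G T p c b = some p
          rw [rot_other hbc hbp (by
            rw [hba]; exact fun h => (c_ne_p hU hpc) (Option.some.inj h).symm)]
          exact hba
        exact ((ih.2 hbp).tail hb').tail (rot_p hU hpc)
    · intro hap
      by_cases hbp : b = p
      · rw [hbp] at hba
        have hcstep : rst G T p c c a := by
          show rotParent G T p c c = some a
          rw [rot_c]; exact hba
        exact (ih.1 hbp).tail hcstep
      · by_cases hbc : b = c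
        · rw [hbc] at hba
          exact absurd (Option.some.inj (hba.symm.trans hpc)) hap
        · have hvb' := ih.2 hbp
          by_cases hac : a = c
          · rw [hac] at hba ⊢
            by_cases hm : ∃ u, ReflTransGen (pst T) u b ∧ G.Adj u p
            · refine (hvb'.tail ?_).tail (rot_p hU hpc)
              exact rot_child_pos hbc hbp hba hm
            · exact hvb'.tail (rot_child_neg hbc hbp hba hm)
          · refine hvb'.tail ?_
            show rotParent G T p c b = some a
            rw [rot_other hbc hbp (by
              rw [hba]; exact fun h => hac (Option.some.inj h))]
            exact hba

omit hU hpc in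
/-- decomposition of a chain reaching c -/
theorem reach_c_cases : ∀ {v : V}, ReflTransGen (pst T) v c →
    v = c ∨ ∃ x, T.parent x = some c ∧ ReflTransGen (pst T) v x := by
  intro v h
  rcases h.cases_tail with rfl | ⟨b, hvb, hbc⟩
  · exact .inl rfl
  · exact .inr ⟨b, hbc, hvb⟩

/-- forward simulation for p, refined -/
theorem fwd3 : ∀ {v : V}, ReflTransGen (pst T) v p →
    ReflTransGen (rst G T p c) v p ∨
    (v = c ∨ ∃ x, T.parent x = some c ∧
      ¬ (∃ u, ReflTransGen (pst T) u x ∧ G.Adj u p) ∧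
      ReflTransGen (pst T) v x) := by
  intro v h
  rcases h.cases_tail with rfl | ⟨b, hvb, hbp⟩
  · exact .inl .refl
  · by_cases hbc : b = c
    · rw [hbc] at hvb
      rcases reach_c_cases hvb with hvc | ⟨x, hxc, hvx⟩
      · exact .inr (.inl hvc)
      · by_cases hm : ∃ u, ReflTransGen (pst T) u x ∧ G.Adj u p
        · left
          have hxp : x ≠ p := fun h => fp_ne_c hU hpc (by rw [← h]; exact hxc)
          have hxne : x ≠ c := fun h => no_self_loop hU c (h ▸ hxc)
          exact ((fwd12 hU hpc hvx).2 hxp).tail (rot_child_pos hxne hxp hxc hm)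
        · exact .inr (.inr ⟨x, hxc, hm, hvx⟩)
    · have hbp' : b ≠ p := fun h => no_self_loop hU p (h ▸ hbp)
      left
      refine ((fwd12 hU hpc hvb).2 hbp').tail ?_
      show rotParent G T p c b = some p
      rw [rot_other hbc hbp' (by
        rw [hbp]; exact fun h => (c_ne_p hU hpc) (Option.some.inj h).symm)]
      exact hbp

end Facts
end RotAux

namespace RotAux

open Relation

variable {V : Type}

section Facts2

variable {G : SimpleGraph V} {T : RTree V} {p c : V}
variable (hU : ∀ v, v ∈ T.supp) (hpc : T.parent c = some p)

include hU hpc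

/-- backward simulation -/
theorem bwd : ∀ {v a : V}, ReflTransGen (rst G T p c) v a →
    (a ≠ c → ReflTransGen (pst T) v a) ∧
    (a = c → ReflTransGen (pst T) v p) ∧
    (a = p → ReflTransGen (pst T) v c →
      ∃ x, T.parent x = some c ∧ (∃ u, ReflTransGen (pst T) u x ∧ G.Adj u p) ∧
        ReflTransGen (pst T) v x) := by
  intro v a h
  induction h with
  | refl =>
    refine ⟨fun _ => .refl, fun h => ?_, fun h1 h2 => ?_⟩
    · rw [h]; exact .single hpc
    · rw [h1] at h2
      exact absurd (chain_antisymm hU h2 (.single hpc)) (c_ne_p hU hpc).symm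
  | @tail b a hvb hba ih =>
    have hba0 : rotParent G T p c b = some a := hba
    by_cases hbc : b = c
    · rw [hbc] at hba0
      rw [rot_c] at hba0
      have hac : a ≠ c := fun h => fp_ne_c hU hpc (by rw [← h]; exact hba0)
      have hap : a ≠ p := fun h => no_self_loop hU p (by rw [h] at hba0; exact hba0)
      have hvp := ih.2.1 hbc
      exact ⟨fun _ => hvp.tail hba0, fun h => absurd h hac, fun h => absurd h hap⟩
    · by_cases hbp : b = p
      · rw [hbp, rot_p hU hpc] at hba0
        have hac : a = c := (Option.some.inj hba0).symm
        have hvp : ReflTransGen (pst T) v p := by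
          have := ih.1 (show b ≠ c by rw [hbp]; exact (c_ne_p hU hpc).symm)
          rwa [hbp] at this
        exact ⟨fun h => absurd hac h, fun _ => hvp,
          fun h => absurd (hac.symm.trans h) (c_ne_p hU hpc)⟩
      · have hbv := ih.1 hbc
        by_cases hb3 : T.parent b = some c
        · by_cases hm : ∃ u, ReflTransGen (pst T) u b ∧ G.Adj u p
          · rw [rot_child_pos hbc hbp hb3 hm] at hba0
            have hap : a = p := (Option.some.inj hba0).symm
            exact ⟨fun _ => by rw [hap]; exact (hbv.tail hb3).tail hpc,
              fun h => absurd (hap.symm.trans h) (c_ne_p hU hpc).symm,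
              fun _ _ => ⟨b, hb3, hm, hbv⟩⟩
          · rw [rot_child_neg hbc hbp hb3 hm] at hba0
            have hac : a = c := (Option.some.inj hba0).symm
            exact ⟨fun h => absurd hac h, fun _ => (hbv.tail hb3).tail hpc,
              fun h => absurd (hac.symm.trans h) (c_ne_p hU hpc)⟩
        · rw [rot_other hbc hbp hb3] at hba0
          refine ⟨fun _ => hbv.tail hba0,
            fun h => absurd (show T.parent b = some c by rw [← h]; exact hba0) hb3,
            fun hap hvc => ?_⟩
          exfalso
          rcases det_total hvc hbv with hcb | hbc2
          · rcases hcb.cases_head with h | ⟨z, hz, hzb⟩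
            · exact hbc h.symm
            · have hzp : z = p := Option.some.inj (hz.symm.trans hpc)
              rw [hzp] at hzb
              rw [hap] at hba0
              exact hbp (chain_antisymm hU hzb (.single hba0)).symm
          · rcases hbc2.cases_head with h | ⟨z, hz, hzc⟩
            · exact hbc h
            · have hza : z = a := Option.some.inj (hz.symm.trans hba0)
              rw [hza, hap] at hzc
              exact (c_ne_p hU hpc).symm (chain_antisymm hU hzc (.single hpc))

/-- crossing lemma: an edge from inside `desc c` to `desc p \ desc c` must end at `p`. -/
theorem crossing (hcomp : ∀ u v : V, G.Adj u v →
      ReflTransGen (pst T) v u ∨ ReflTransGen (pst T) u v)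
    {a b : V} (hadj : G.Adj a b) (hca : ReflTransGen (pst T) a c)
    (hpb : ReflTransGen (pst T) b p) (hncb : ¬ ReflTransGen (pst T) b c) :
    b = p := by
  rcases hcomp a b hadj with hba | hab
  · exact absurd (hba.trans hca) hncb
  · rcases det_total hab hca with h1 | h2
    · exact absurd h1 hncb
    · rcases h2.cases_head with h | ⟨z, hz, hzb⟩
      · exact absurd (h ▸ ReflTransGen.refl) hncb
      · have hzp : z = p := Option.some.inj (hz.symm.trans hpc)
        rw [hzp] at hzb
        exact chain_antisymm hU hpb hzb

end Facts2
end RotAux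

namespace RotAux

open Relation

variable {V : Type}

theorem reach_of_conn {H : SimpleGraph V} {S : Set V} {u w : V} (hu : u ∈ S)
    (h : ReflTransGen (fun a b => H.Adj a b ∧ a ∈ S ∧ b ∈ S) u w) :
    ∃ hw : w ∈ S, (H.induce S).Reachable ⟨u, hu⟩ ⟨w, hw⟩ := by
  induction h with
  | refl => exact ⟨hu, SimpleGraph.Reachable.refl _⟩
  | tail h1 h2 ih =>
    obtain ⟨hb, hr⟩ := ih
    exact ⟨h2.2.2, hr.trans (SimpleGraph.Adj.reachable (by exact h2.1))⟩

theorem conn_of_reach {H : SimpleGraph V} {S : Set V} {x y : ↑S}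
    (h : (H.induce S).Reachable x y) :
    ReflTransGen (fun a b => H.Adj a b ∧ a ∈ S ∧ b ∈ S) ↑x ↑y := by
  obtain ⟨w⟩ := h
  induction w with
  | nil => exact .refl
  | cons h' q ih =>
    exact Relation.ReflTransGen.head ⟨h', Subtype.coe_prop _, Subtype.coe_prop _⟩ ih

end RotAux


open Relation RotAux

/-- rotating an edge of a search tree on a connected graph yields a
search tree on the same graph. -/
theorem rotation_preserves_search_tree {V : Type} [Fintype V]
    (G : SimpleGraph V) (hG : G.Connected)
    (T : RTree V) (hT : IsSTG G T) (p c : V) (hpc : T.parent c = some p) :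
    ∃ T' : RTree V, IsRotationAt G T T' p c ∧ IsSTG G T' := by
  classical
  obtain ⟨hsupp, hconn, hcomp⟩ := hT
  have hU : ∀ v, v ∈ T.supp := fun v => by rw [hsupp]; exact Finset.mem_univ v
  have hcnep : c ≠ p := c_ne_p hU hpc
  have root_cases : ∀ v : V, rotParent G T p c v = none →
      (v = c ∧ T.parent p = none) ∨ (v ≠ c ∧ v ≠ p ∧ T.parent v = none) := by
    intro v hv
    by_cases h1 : v = c
    · rw [h1, rot_c] at hv; exact .inl ⟨h1, hv⟩
    · right
      by_cases h2 : v = p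
      · rw [h2, rot_p hU hpc] at hv; simp at hv
      · refine ⟨h1, h2, ?_⟩
        by_cases h3 : T.parent v = some c
        · by_cases hm : ∃ u, ReflTransGen (pst T) u v ∧ G.Adj u p
          · rw [rot_child_pos h1 h2 h3 hm] at hv; simp at hv
          · rw [rot_child_neg h1 h2 h3 hm] at hv; simp at hv
        · rwa [rot_other h1 h2 h3] at hv
  have hru : ∀ v ∈ (Finset.univ : Finset V), ∀ w ∈ (Finset.univ : Finset V),
      rotParent G T p c v = none → rotParent G T p c w = none → v = w := by
    intro v _ w _ hv hw
    rcases root_cases v hv with ⟨hv1, hv2⟩ | ⟨hv1, hv2, hv3⟩ <;>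
      rcases root_cases w hw with ⟨hw1, hw2⟩ | ⟨hw1, hw2, hw3⟩
    · rw [hv1, hw1]
    · exact absurd (T.root_unique w (hU w) p (hU p) hw3 hv2) hw2
    · exact absurd (T.root_unique v (hU v) p (hU p) hv3 hw2) hv2
    · exact T.root_unique v (hU v) w (hU w) hv3 hw3
  have hrr : ∀ v ∈ (Finset.univ : Finset V), ∃ r ∈ (Finset.univ : Finset V),
      rotParent G T p c r = none ∧
      Relation.ReflTransGen (fun a b => rotParent G T p c a = some b) v r := by
    intro v _
    obtain ⟨r, -, hrnone, hchain⟩ := T.reaches_root v (hU v)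
    by_cases hrp : r = p
    · rw [hrp] at hchain hrnone
      refine ⟨c, Finset.mem_univ c, ?_, (fwd12 hU hpc hchain).1 rfl⟩
      rw [rot_c]; exact hrnone
    · refine ⟨r, Finset.mem_univ r, ?_, (fwd12 hU hpc hchain).2 hrp⟩
      have hrc : r ≠ c := fun h => by rw [h, hpc] at hrnone; simp at hrnone
      have h3 : T.parent r ≠ some c := by rw [hrnone]; simp
      rw [rot_other hrc hrp h3, hrnone]
  set T' : RTree V :=
    ⟨Finset.univ, rotParent G T p c, fun v hv => absurd (Finset.mem_univ v) hv,
      fun _ => ⟨Finset.mem_univ _, Finset.mem_univ _⟩, hru, hrr⟩ with hT'def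
  have hrot : IsRotationAt G T T' p c := by
    refine ⟨hpc, hsupp.symm, rot_c, rot_p hU hpc, ?_, ?_⟩
    · intro x hxp h3
      have hxc : x ≠ c := fun hx => hcnep (Option.some.inj ((hx ▸ h3).symm.trans hpc))
      constructor
      · rintro ⟨u, hu1, hu2⟩
        exact rot_child_pos hxc hxp h3 ⟨u, hu1, hu2⟩
      · intro hm
        refine rot_child_neg hxc hxp h3 ?_
        rintro ⟨u, hu1, hu2⟩
        exact hm ⟨u, hu1, hu2⟩
    · intro x h1 h2 h3
      exact rot_other h1 h2 h3
  have hcomp' : ∀ u v : V, G.Adj u v → T'.Anc u v ∨ T'.Anc v u := by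
    have key : ∀ u v : V, G.Adj u v → T.Anc u v → T'.Anc u v ∨ T'.Anc v u := by
      intro u v hadj hanc
      by_cases hup : u = p
      · rw [hup] at hanc hadj ⊢
        rcases fwd3 hU hpc hanc with h | hvc | ⟨x, hxc, hnm, hvx⟩
        · exact .inl h
        · rw [hvc]
          exact .inr (.single (rot_p hU hpc))
        · exact absurd ⟨v, hvx, hadj.symm⟩ hnm
      · exact .inl ((fwd12 hU hpc hanc).2 hup)
    intro u v hadj
    rcases hcomp u v (Finset.mem_univ u) (Finset.mem_univ v) hadj with h | h
    · exact key u v hadj h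
    · exact (key v u hadj.symm h).symm
  have hDc : T'.descSet c = T.descSet p := by
    ext u
    constructor
    · intro h
      exact (bwd hU hpc h).2.1 rfl
    · intro h
      exact (fwd12 hU hpc h).1 rfl
  have hDother : ∀ v : V, v ≠ c → v ≠ p → T'.descSet v = T.descSet v := by
    intro v hvc hvp
    ext u
    constructor
    · intro h; exact (bwd hU hpc h).1 hvc
    · intro h; exact (fwd12 hU hpc h).2 hvp
  set Sp : Set V := {u | (T.Anc p u ∧ ¬ T.Anc c u) ∨
      ∃ x, T.parent x = some c ∧
        (∃ w, ReflTransGen (pst T) w x ∧ G.Adj w p) ∧ ReflTransGen (pst T) u x}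
    with hSpdef
  have hDp : T'.descSet p = Sp := by
    ext u
    constructor
    · intro h
      have h1 : T.Anc p u := (bwd hU hpc h).1 hcnep.symm
      by_cases huc : T.Anc c u
      · exact .inr ((bwd hU hpc h).2.2 rfl huc)
      · exact .inl ⟨h1, huc⟩
    · rintro (⟨h1, h2⟩ | ⟨x, hxc, hm, hux⟩)
      · rcases fwd3 hU hpc h1 with h | hvc | ⟨x, hxc, hnm, hux⟩
        · exact h
        · exact absurd (show T.Anc c u by rw [hvc]; exact .refl) h2
        · exact absurd (hux.tail hxc) h2
      · have hxp : x ≠ p := fun h => fp_ne_c hU hpc (by rw [← h]; exact hxc)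
        have hxnc : x ≠ c := fun h => no_self_loop hU c (h ▸ hxc)
        exact ((fwd12 hU hpc hux).2 hxp).tail (rot_child_pos hxnc hxp hxc hm)
  set H : SimpleGraph V := restrictG G ↑(Finset.univ : Finset V) with hHdef
  have hH : ∀ a b : V, H.Adj a b ↔ G.Adj a b := by
    intro a b
    constructor
    · intro h; rw [hHdef] at h; exact h.1
    · intro h; rw [hHdef]; exact ⟨h, by simp, by simp⟩
  have hpSp : p ∈ Sp := .inl ⟨.refl, fun h => hcnep (chain_antisymm hU h (.single hpc)).symm⟩
  have hswap : ∀ (S : Set V) (a b : V),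
      ReflTransGen (fun a b => H.Adj a b ∧ a ∈ S ∧ b ∈ S) a b →
      ReflTransGen (fun a b => H.Adj a b ∧ a ∈ S ∧ b ∈ S) b a := by
    intro S a b h
    haveI : Std.Symm (fun a b => H.Adj a b ∧ a ∈ S ∧ b ∈ S) :=
      ⟨fun x y hxy => ⟨hxy.1.symm, hxy.2.2, hxy.2.1⟩⟩
    exact Std.Symm.symm _ _ h
  have hto : ∀ u ∈ Sp, ReflTransGen (fun a b => H.Adj a b ∧ a ∈ Sp ∧ b ∈ Sp) u p := by
    have hrefine : ∀ w : V,
        ReflTransGen (fun a b => H.Adj a b ∧ a ∈ T.descSet p ∧ b ∈ T.descSet p) p w →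
        w ∈ T.descSet p → ¬ T.Anc c w →
        ReflTransGen (fun a b => H.Adj a b ∧ a ∈ Sp ∧ b ∈ Sp) p w := by
      intro w h
      induction h with
      | refl => intro _ _; exact .refl
      | @tail b w hpb hstep ih =>
        intro hwd hwnc
        by_cases hbc : T.Anc c b
        · have hwp : w = p := crossing hU hpc
            (fun a b h => hcomp a b (Finset.mem_univ a) (Finset.mem_univ b) h)
            ((hH b w).1 hstep.1) hbc hwd hwnc
          rw [hwp]
        · have hbSp : b ∈ Sp := .inl ⟨hstep.2.1, hbc⟩
          exact (ih hstep.2.1 hbc).tail ⟨hstep.1, hbSp, .inl ⟨hwd, hwnc⟩⟩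
    rintro u (⟨hup, hunc⟩ | ⟨x, hxc, ⟨w, hwx, hwp⟩, hux⟩)
    · have hpd : p ∈ T.descSet p := ReflTransGen.refl
      have hr := (hconn p (Finset.mem_univ p)).preconnected ⟨u, hup⟩ ⟨p, hpd⟩
      have h0 := conn_of_reach hr
      exact hswap _ _ _ (hrefine u (hswap _ _ _ h0) hup hunc)
    · have hr := (hconn x (Finset.mem_univ x)).preconnected ⟨u, hux⟩ ⟨w, hwx⟩
      have h0 := conn_of_reach hr
      have hsub : T.descSet x ⊆ Sp := fun z hz => .inr ⟨x, hxc, ⟨w, hwx, hwp⟩, hz⟩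
      have h1 : ReflTransGen (fun a b => H.Adj a b ∧ a ∈ Sp ∧ b ∈ Sp) u w :=
        Relation.ReflTransGen.mono (r := fun a b => H.Adj a b ∧ a ∈ T.descSet x ∧ b ∈ T.descSet x)
          (p := fun a b => H.Adj a b ∧ a ∈ Sp ∧ b ∈ Sp)
          (fun a b hab => ⟨hab.1, hsub hab.2.1, hsub hab.2.2⟩) _ _ h0
      exact h1.tail ⟨(hH w p).2 hwp, hsub hwx, hpSp⟩
  have hconn' : ∀ v ∈ (Finset.univ : Finset V),
      (H.induce (T'.descSet v)).Connected := by
    intro v _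
    by_cases hvc : v = c
    · rw [hvc, hDc]; exact hconn p (Finset.mem_univ p)
    · by_cases hvp : v = p
      · rw [hvp, hDp]
        have hne : Nonempty ↑Sp := ⟨⟨p, hpSp⟩⟩
        refine ⟨fun x y => ?_⟩
        obtain ⟨h1, r1⟩ := reach_of_conn x.2 (hto ↑x x.2)
        obtain ⟨h2, r2⟩ := reach_of_conn y.2 (hto ↑y y.2)
        exact r1.trans r2.symm
      · rw [hDother v hvc hvp]; exact hconn v (Finset.mem_univ v)
  exact ⟨T', hrot, rfl, hconn', fun u v _ _ h => hcomp' u v h⟩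
end

section
/- Let G be a tree, let V(G) be partitioned into parts, and for a search tree T* on G define the alternation number alt(T*) as the maximum, over all nodes z, of the number of edges (x,y) on the path from the root of T* to z such that x and y lie in different parts of the partition. Let T' be obtained from a search tree T on G by rotating an edge (x,y). If x and y lie in the same part of the partition, then alt(T') = alt(T); otherwise |alt(T') − alt(T)| ≤ 2. -/
section AuxLemmas

variable {V K : Type}

private lemma rtree_no_cycle (T : RTree V) {v : V} (hv : v ∈ T.supp) :
    ¬ Relation.TransGen (fun a b => T.parent a = some b) v v := by
  obtain ⟨r, -, hrnone, hreach⟩ := T.reaches_root v hv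
  clear hv
  induction hreach using Relation.ReflTransGen.head_induction_on with
  | refl =>
    intro hc
    obtain ⟨b, hb, -⟩ := (Relation.TransGen.head'_iff).mp hc
    rw [hrnone] at hb
    exact nomatch hb
  | @head a c h' hrtg ih =>
    intro hc
    obtain ⟨b, hb, hba⟩ := (Relation.TransGen.head'_iff).mp hc
    rw [h'] at hb
    obtain rfl : c = b := Option.some.inj hb
    exact ih (Relation.TransGen.tail' hba h')

private lemma rtree_parent_not_anc (T : RTree V) {a b : V} (h : T.parent a = some b) :
    ¬ T.Anc a b := fun hanc =>
  rtree_no_cycle T (T.mem_of_parent h).2 (Relation.TransGen.tail' hanc h)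

private lemma rtree_anc_iff (T : RTree V) {z w : V} (h : T.parent z = some w) (a : V) :
    T.Anc a z ↔ a = z ∨ T.Anc a w := by
  constructor
  · intro ha
    rcases Relation.ReflTransGen.cases_head ha with h1 | ⟨c, hc, hca⟩
    · exact Or.inl h1.symm
    · rw [h] at hc
      obtain rfl : w = c := Option.some.inj hc
      exact Or.inr hca
  · rintro (rfl | ha)
    · exact Relation.ReflTransGen.refl
    · exact Relation.ReflTransGen.head h ha

private lemma rtree_altAt_root (f : V → K) (T : RTree V) {z : V} (h : T.parent z = none) :
    altAt f T z = 0 := by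
  have hset : {a | T.Anc a z ∧ ∃ b, T.parent a = some b ∧ f a ≠ f b} = ∅ := by
    ext a
    simp only [Set.mem_setOf_eq, Set.mem_empty_iff_false, iff_false, not_and]
    intro hanc
    rcases Relation.ReflTransGen.cases_head hanc with h1 | ⟨c, hc, -⟩
    · subst h1
      rintro ⟨b, hb, -⟩
      rw [h] at hb; exact nomatch hb
    · rw [h] at hc; exact nomatch hc
  unfold altAt
  rw [hset, Set.ncard_empty]

open Classical in
private lemma rtree_altAt_parent [Finite V] (f : V → K) (T : RTree V) {z w : V}
    (h : T.parent z = some w) :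
    (altAt f T z : ℤ) = (altAt f T w : ℤ) + (if f z = f w then 0 else 1) := by
  have hnot : ¬ T.Anc z w := rtree_parent_not_anc T h
  by_cases hf : f z = f w
  · have hset : {a | T.Anc a z ∧ ∃ b, T.parent a = some b ∧ f a ≠ f b}
        = {a | T.Anc a w ∧ ∃ b, T.parent a = some b ∧ f a ≠ f b} := by
      ext a
      simp only [Set.mem_setOf_eq, rtree_anc_iff T h a]
      constructor
      · rintro ⟨rfl | haw, hq⟩
        · obtain ⟨b, hb, hfb⟩ := hq
          rw [h] at hb
          obtain rfl : w = b := Option.some.inj hb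
          exact absurd hf hfb
        · exact ⟨haw, hq⟩
      · rintro ⟨haw, hq⟩
        exact ⟨Or.inr haw, hq⟩
    rw [if_pos hf]
    unfold altAt
    rw [hset]
    push_cast
    ring
  · have hset : {a | T.Anc a z ∧ ∃ b, T.parent a = some b ∧ f a ≠ f b}
        = insert z {a | T.Anc a w ∧ ∃ b, T.parent a = some b ∧ f a ≠ f b} := by
      ext a
      simp only [Set.mem_setOf_eq, Set.mem_insert_iff, rtree_anc_iff T h a]
      constructor
      · rintro ⟨rfl | haw, hq⟩
        · exact Or.inl rfl
        · exact Or.inr ⟨haw, hq⟩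
      · rintro (rfl | ⟨haw, hq⟩)
        · exact ⟨Or.inl rfl, w, h, hf⟩
        · exact ⟨Or.inr haw, hq⟩
    have hzmem : z ∉ {a | T.Anc a w ∧ ∃ b, T.parent a = some b ∧ f a ≠ f b} :=
      fun hmem => hnot hmem.1
    unfold altAt
    rw [if_neg hf, hset, Set.ncard_insert_of_notMem hzmem (Set.toFinite _)]
    push_cast
    ring

end AuxLemmas

/-- effect of a rotation on the alternation number w.r.t. a partition
(given by a coloring `f`). -/
theorem rotation_alternation_number {V K : Type} [Fintype V]
    (G : SimpleGraph V) (hG : G.IsTree) (f : V → K)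
    (T T' : RTree V) (hT : IsSTG G T)
    (x y : V) (hrot : IsRotationAt G T T' x y) :
    (f x = f y → altNum f T' = altNum f T) ∧
    (f x ≠ f y → |(altNum f T' : ℤ) - (altNum f T : ℤ)| ≤ 2) := by
  classical
  obtain ⟨hpc, hsupp, hTy', hTx', hmove, hkeep⟩ := hrot
  have hsT : T.supp = Finset.univ := hT.1
  have hmemT : ∀ v : V, v ∈ T.supp := fun v => by rw [hsT]; exact Finset.mem_univ v
  have hmemT' : ∀ v : V, v ∈ T'.supp := fun v => by rw [hsupp, hsT]; exact Finset.mem_univ v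
  have hxy : x ≠ y := by
    intro h
    subst h
    exact rtree_parent_not_anc T hpc Relation.ReflTransGen.refl
  have hAncxy : T.Anc x y := Relation.ReflTransGen.single hpc
  have hIb : ∀ a b : K, 0 ≤ (if a = b then (0:ℤ) else 1) ∧ (if a = b then (0:ℤ) else 1) ≤ 1 := by
    intro a b; split_ifs <;> norm_num
  have hIc : ∀ a b : K, (if a = b then (0:ℤ) else 1) = (if b = a then (0:ℤ) else 1) := by
    intro a b
    by_cases h : a = b
    · rw [if_pos h, if_pos h.symm]
    · rw [if_neg h, if_neg (fun hh => h hh.symm)]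
  have hstepT : ∀ {z w : V}, T.parent z = some w →
      (altAt f T z : ℤ) = (altAt f T w : ℤ) + (if f z = f w then 0 else 1) :=
    fun h => rtree_altAt_parent f T h
  have hstepT' : ∀ {z w : V}, T'.parent z = some w →
      (altAt f T' z : ℤ) = (altAt f T' w : ℤ) + (if f z = f w then 0 else 1) :=
    fun h => rtree_altAt_parent f T' h
  set E := (if f x = f y then (0:ℤ) else 1) with hE
  set A1 := (T.parent x).elim (0:ℤ) (fun q => if f x = f q then (0:ℤ) else 1) with hA1
  set A2 := (T.parent x).elim (0:ℤ) (fun q => if f y = f q then (0:ℤ) else 1) with hA2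
  have hEb : 0 ≤ E ∧ E ≤ 1 := hE ▸ hIb (f x) (f y)
  have hA1b : 0 ≤ A1 ∧ A1 ≤ 1 := by
    rw [hA1]
    cases hq : T.parent x with
    | none => norm_num
    | some q => exact hIb (f x) (f q)
  have hA2b : 0 ≤ A2 ∧ A2 ≤ 1 := by
    rw [hA2]
    cases hq : T.parent x with
    | none => norm_num
    | some q => exact hIb (f y) (f q)
  have hEeq : f x = f y → E = 0 := fun h => by rw [hE, if_pos h]
  have hA12 : f x = f y → A1 = A2 := fun h => by rw [hA1, hA2, h]
  have key : ∀ z : V, ∃ d : ℤ,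
      (altAt f T' z : ℤ) = (altAt f T z : ℤ) + d ∧
      (¬ T.Anc x z → d = 0) ∧
      (z = x → d = A2 - A1 + E) ∧
      (z = y → d = A2 - A1 - E) ∧
      (f x = f y → d = 0) ∧ |d| ≤ 2 := by
    intro z
    obtain ⟨r, -, hrnone, hreach⟩ := T'.reaches_root z (hmemT' z)
    induction hreach using Relation.ReflTransGen.head_induction_on with
    | refl =>
      by_cases hry : r = y
      · rw [hry] at hrnone ⊢
        have hpx : T.parent x = none := by rw [← hTy']; exact hrnone
        have h1 : altAt f T' y = 0 := rtree_altAt_root f T' hrnone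
        have h2 : altAt f T x = 0 := rtree_altAt_root f T hpx
        have hs2 := hstepT hpc
        have hA1z : A1 = 0 := by rw [hA1, hpx]; rfl
        have hA2z : A2 = 0 := by rw [hA2, hpx]; rfl
        have hEc : (if f y = f x then (0:ℤ) else 1) = E := by
          rw [hIc (f y) (f x), hE]
        refine ⟨-E, by omega, fun hna => absurd hAncxy hna,
          fun h => absurd h.symm hxy, fun _ => by rw [hA1z, hA2z]; ring,
          fun hf => by rw [hEeq hf]; ring, by rw [abs_le]; omega⟩
      · have hrx : r ≠ x := fun h => by rw [h, hTx'] at hrnone; exact nomatch hrnone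
        have hpay : T.parent r ≠ some y := fun h => by
          rcases em (∃ u ∈ T.descSet r, G.Adj u x) with hm | hm
          · rw [(hmove r hrx h).1 hm] at hrnone; exact nomatch hrnone
          · rw [(hmove r hrx h).2 hm] at hrnone; exact nomatch hrnone
        have hpr : T.parent r = none := by rw [← hkeep r hry hrx hpay]; exact hrnone
        have h1 : altAt f T' r = 0 := rtree_altAt_root f T' hrnone
        have h2 : altAt f T r = 0 := rtree_altAt_root f T hpr
        exact ⟨0, by omega, fun _ => rfl, fun h => absurd h hrx,
          fun h => absurd h hry, fun _ => rfl, by norm_num⟩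
    | @head a c h' hrtg ih =>
      by_cases hay : a = y
      · rw [hay] at h' ⊢
        have hpx : T.parent x = some c := by rw [← hTy']; exact h'
        have hxc : ¬ T.Anc x c := fun hanc =>
          rtree_no_cycle T (hmemT c) (Relation.TransGen.tail' hanc hpx)
        obtain ⟨dc, hc1, hc2, -, -, -, -⟩ := ih
        have hdc0 : dc = 0 := hc2 hxc
        have hs1 := hstepT' h'
        have hs2 := hstepT hpc
        have hs3 := hstepT hpx
        have hA1c : A1 = (if f x = f c then (0:ℤ) else 1) := by rw [hA1, hpx]; rfl
        have hA2c : A2 = (if f y = f c then (0:ℤ) else 1) := by rw [hA2, hpx]; rfl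
        have hEc : (if f y = f x then (0:ℤ) else 1) = E := by
          rw [hIc (f y) (f x), hE]
        refine ⟨A2 - A1 - E, by omega, fun hna => absurd hAncxy hna,
          fun h => absurd h.symm hxy, fun _ => rfl,
          fun hf => by rw [hA12 hf, hEeq hf]; ring, by rw [abs_le]; omega⟩
      · by_cases hax : a = x
        · rw [hax] at h' ⊢
          obtain rfl : y = c := by rw [hTx'] at h'; exact Option.some.inj h'
          obtain ⟨dy, hy1, -, -, hy4, -, -⟩ := ih
          have hdy : dy = A2 - A1 - E := hy4 rfl
          have hs1 := hstepT' h'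
          have hs2 := hstepT hpc
          rw [← hE] at hs1
          have hEc : (if f y = f x then (0:ℤ) else 1) = E := by
            rw [hIc (f y) (f x), hE]
          refine ⟨A2 - A1 + E, by omega, fun hna => absurd Relation.ReflTransGen.refl hna,
            fun _ => rfl, fun h => absurd h hxy,
            fun hf => by rw [hA12 hf, hEeq hf]; ring, by rw [abs_le]; omega⟩
        · by_cases hpay : T.parent a = some y
          · have hAncxa : T.Anc x a :=
              Relation.ReflTransGen.head hpay (Relation.ReflTransGen.single hpc)
            rcases em (∃ u ∈ T.descSet a, G.Adj u x) with hm | hm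
            · -- moved child
              have hpa' : T'.parent a = some x := (hmove a hax hpay).1 hm
              obtain rfl : x = c := by rw [hpa'] at h'; exact Option.some.inj h'
              obtain ⟨dx, hx1, -, hx3, -, -, -⟩ := ih
              have hdx : dx = A2 - A1 + E := hx3 rfl
              have hs1 := hstepT' h'
              have hs2 := hstepT hpay
              have hs3 := hstepT hpc
              have hEc : (if f y = f x then (0:ℤ) else 1) = E := by
                rw [hIc (f y) (f x), hE]
              have hb1 := hIb (f a) (f x)
              have hb2 := hIb (f a) (f y)
              refine ⟨A2 - A1 + (if f a = f x then (0:ℤ) else 1)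
                  - (if f a = f y then (0:ℤ) else 1), by omega,
                fun hna => absurd hAncxa hna, fun h => absurd h hax,
                fun h => absurd h hay,
                fun hf => by rw [hA12 hf, hf]; ring, by rw [abs_le]; omega⟩
            · -- staying child
              have hpa' : T'.parent a = some y := (hmove a hax hpay).2 hm
              obtain rfl : y = c := by rw [hpa'] at h'; exact Option.some.inj h'
              obtain ⟨dy, hy1, -, -, -, hy5, hy6⟩ := ih
              have hs1 := hstepT' h'
              have hs2 := hstepT hpay
              refine ⟨dy, by omega, fun hna => absurd hAncxa hna,
                fun h => absurd h hax, fun h => absurd h hay, hy5, hy6⟩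
          · -- generic node
            have hpa' : T'.parent a = T.parent a := hkeep a hay hax hpay
            have hpa : T.parent a = some c := by rw [← hpa']; exact h'
            obtain ⟨dc, hc1, hc2, -, -, hc5, hc6⟩ := ih
            have hs1 := hstepT' h'
            have hs2 := hstepT hpa
            refine ⟨dc, by omega,
              fun hna => hc2 (fun hanc => hna (Relation.ReflTransGen.head hpa hanc)),
              fun h => absurd h hax, fun h => absurd h hay, hc5, hc6⟩
  have hub : altNum f T' ≤ altNum f T + 2 := by
    unfold altNum
    refine Finset.sup_le fun z _ => ?_
    obtain ⟨d, h1, -, -, -, -, h6⟩ := key z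
    rw [abs_le] at h6
    have h2 : altAt f T z ≤ T.supp.sup (fun z => altAt f T z) :=
      Finset.le_sup (hmemT z)
    omega
  have hlb : altNum f T ≤ altNum f T' + 2 := by
    unfold altNum
    refine Finset.sup_le fun z _ => ?_
    obtain ⟨d, h1, -, -, -, -, h6⟩ := key z
    rw [abs_le] at h6
    have h2 : altAt f T' z ≤ T'.supp.sup (fun z => altAt f T' z) :=
      Finset.le_sup (hmemT' z)
    omega
  refine ⟨fun hf => ?_, fun _ => by rw [abs_le]; omega⟩
  unfold altNum
  rw [hsupp]
  refine Finset.sup_congr rfl fun z _ => ?_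
  obtain ⟨d, h1, -, -, -, h5, -⟩ := key z
  have := h5 hf
  omega
end
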